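/- Let v : ℝ^d → ℝ^d be measurable and bounded in L^p, let ρ_ε be a standard mollifier, and set v_ε = v * ρ_ε and R_ε = v_ε ⊗ v_ε − (v ⊗ v)_ε. Then for every x, pointwise: (|v|² v)_ε(x) = K^v_ε(x) − 2 R_ε(x) v_ε(x) − v_ε(x) tr R_ε(x) + |v_ε(x)|² v_ε(x), where K^v_ε(x) = ∫ |v(x−h) − v_ε(x)|² (v(x−h) − v_ε(x)) ρ_ε(h) dh. -/

import Mathlib

open MeasureTheory Set
open scoped ENNReal Topology

noncomputable section

private lemma eucl_integral_apply {d : ℕ} (f : EuclideanSpace ℝ (Fin d) → EuclideanSpace ℝ (Fin d))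
    (hf : Integrable f) (i : Fin d) : (∫ y, f y) i = ∫ y, f y i := by
  have := ContinuousLinearMap.integral_comp_comm (EuclideanSpace.proj i (𝕜 := ℝ)) hf
  simpa using this.symm

private lemma eucl_integrable_of_comp {d : ℕ}
    (f : EuclideanSpace ℝ (Fin d) → EuclideanSpace ℝ (Fin d))
    (hf : ∀ i, Integrable (fun y => f y i)) : Integrable f := by
  have h : f = fun y => ∑ i, (f y i) • (EuclideanSpace.single i (1:ℝ)) := by
    funext y; ext i
    rw [WithLp.ofLp_sum, Finset.sum_apply]
    simp [EuclideanSpace.single_apply]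
  rw [h]
  exact integrable_finset_sum _ (fun i _ => (hf i).smul_const _)

private lemma eucl_comp_integrable {d : ℕ}
    (f : EuclideanSpace ℝ (Fin d) → EuclideanSpace ℝ (Fin d))
    (hf : Integrable f) (i : Fin d) : Integrable (fun y => f y i) := by
  have := (EuclideanSpace.proj i (𝕜 := ℝ)).integrable_comp hf
  simpa using this

private lemma eucl_norm_sq {d : ℕ} (a : EuclideanSpace ℝ (Fin d)) :
    ‖a‖ ^ 2 = ∑ i, a i * a i := by
  rw [← real_inner_self_eq_norm_sq]
  simp only [PiLp.inner_apply, RCLike.inner_apply, conj_trivial]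

/-- The rescaled mollification kernel `ρ_ε(y) = ε^{-d} ρ(y/ε)`. -/
def mollKer (d : ℕ) (ρ : EuclideanSpace ℝ (Fin d) → ℝ) (ε : ℝ)
    (y : EuclideanSpace ℝ (Fin d)) : ℝ :=
  ε ^ (-(d : ℝ)) * ρ (ε⁻¹ • y)

/-- Spatial mollification of a vector field: `v_ε(x) = ∫ ρ_ε(y) v(x−y) dy`. -/
def mollVec (d : ℕ) (ρ : EuclideanSpace ℝ (Fin d) → ℝ) (ε : ℝ)
    (v : EuclideanSpace ℝ (Fin d) → EuclideanSpace ℝ (Fin d))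
    (x : EuclideanSpace ℝ (Fin d)) : EuclideanSpace ℝ (Fin d) :=
  ∫ y, mollKer d ρ ε y • v (x - y)

/-- The Reynolds-type stress tensor `R_ε = v_ε ⊗ v_ε − (v ⊗ v)_ε` (matrix entries). -/
def Rmat (d : ℕ) (ρ : EuclideanSpace ℝ (Fin d) → ℝ) (ε : ℝ)
    (v : EuclideanSpace ℝ (Fin d) → EuclideanSpace ℝ (Fin d))
    (x : EuclideanSpace ℝ (Fin d)) (i j : Fin d) : ℝ :=
  mollVec d ρ ε v x i * mollVec d ρ ε v x j
    - ∫ y, mollKer d ρ ε y * (v (x - y) i * v (x - y) j)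

/-- the pointwise higher-order averaging identity
`(|v|² v)_ε = K^v_ε − 2 R_ε v_ε − v_ε tr R_ε + |v_ε|² v_ε`. -/
theorem stmt5 (d : ℕ) (ρ : EuclideanSpace ℝ (Fin d) → ℝ)
    (hρ_smooth : ContDiff ℝ (⊤ : ℕ∞) ρ)
    (hρ_nonneg : ∀ y, 0 ≤ ρ y)
    (hρ_supp : Function.support ρ ⊆ Metric.ball 0 1)
    (hρ_int : ∫ y, ρ y = 1)
    (ε : ℝ) (hε : 0 < ε)
    (v : EuclideanSpace ℝ (Fin d) → EuclideanSpace ℝ (Fin d))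
    (hv : Measurable v)
    (x : EuclideanSpace ℝ (Fin d))
    (hker_int : ∫ y, mollKer d ρ ε y = 1)
    (h1 : Integrable (fun y => (mollKer d ρ ε y * ‖v (x - y)‖ ^ 2) • v (x - y)))
    (h2 : Integrable (fun y => mollKer d ρ ε y • v (x - y)))
    (h3 : ∀ i j : Fin d, Integrable (fun y => mollKer d ρ ε y * (v (x - y) i * v (x - y) j))) :
    (∫ y, (mollKer d ρ ε y * ‖v (x - y)‖ ^ 2) • v (x - y))
      = (∫ y, (mollKer d ρ ε y * ‖v (x - y) - mollVec d ρ ε v x‖ ^ 2)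
            • (v (x - y) - mollVec d ρ ε v x))
        - (2 : ℝ) • ((WithLp.equiv 2 (Fin d → ℝ)).symm
            (fun i => ∑ j, Rmat d ρ ε v x i j * mollVec d ρ ε v x j))
        - (∑ i, Rmat d ρ ε v x i i) • mollVec d ρ ε v x
        + (‖mollVec d ρ ε v x‖ ^ 2) • mollVec d ρ ε v x := by
  set u := mollVec d ρ ε v x with hu_def
  set k := mollKer d ρ ε with hk_def
  -- integrability of the kernel itself
  have kcont : Continuous k := by
    rw [hk_def]
    unfold mollKer
    exact continuous_const.mul (hρ_smooth.continuous.comp (continuous_const_smul ε⁻¹))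
  have ksupp : HasCompactSupport k := by
    apply HasCompactSupport.intro (isCompact_closedBall (0 : EuclideanSpace ℝ (Fin d)) ε)
    intro y hy
    have hzero : ρ (ε⁻¹ • y) = 0 := by
      by_contra h
      have hball := hρ_supp (Function.mem_support.2 h)
      rw [Metric.mem_ball, dist_zero_right] at hball
      rw [norm_smul, norm_inv, Real.norm_eq_abs, abs_of_pos hε] at hball
      have : ‖y‖ < ε := by
        have := (inv_mul_lt_iff₀ hε).1 hball
        simpa using this
      exact hy (by simpa [Metric.mem_closedBall, dist_zero_right] using this.le)
    simp [hk_def, mollKer, hzero]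
  have kint : Integrable k := kcont.integrable_of_hasCompactSupport ksupp
  -- components of u
  have hui : ∀ i, u i = ∫ y, k y * v (x - y) i := by
    intro i
    rw [hu_def]
    show (∫ y, k y • v (x - y)) i = _
    rw [eucl_integral_apply _ h2 i]
    simp [smul_eq_mul]
  -- abbreviation for second moments
  have hIint : ∀ i j, Integrable (fun y => k y * (v (x - y) i * v (x - y) j)) := h3
  -- scalar integrable pieces
  have hP1 : ∀ i, Integrable (fun y => k y * ‖v (x - y)‖ ^ 2 * v (x - y) i) := by
    intro i
    have := eucl_comp_integrable _ h1 i
    refine this.congr ?_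
    filter_upwards with y
    show (k y * ‖v (x - y)‖ ^ 2) • v (x - y) i = _
    rw [smul_eq_mul]
  have hP3 : ∀ i, Integrable (fun y => k y * v (x - y) i) := by
    intro i
    have := eucl_comp_integrable _ h2 i
    refine this.congr ?_
    filter_upwards with y
    show k y • v (x - y) i = _
    rw [smul_eq_mul]
  have hT2 : ∀ i, Integrable (fun y => ∑ j, (2 * u j) * (k y * (v (x - y) i * v (x - y) j))) :=
    fun i => integrable_finset_sum _ (fun j _ => (h3 i j).const_mul _)
  have hT4 : Integrable (fun y => ∑ j, k y * (v (x - y) j * v (x - y) j)) :=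
    integrable_finset_sum _ (fun j _ => h3 j j)
  have hT5 : Integrable (fun y => ∑ j, u j * (k y * v (x - y) j)) :=
    integrable_finset_sum _ (fun j _ => (hP3 j).const_mul _)
  -- pointwise expansion of the fluctuation integrand, componentwise
  have expand : ∀ (i : Fin d) (y : EuclideanSpace ℝ (Fin d)),
      k y * ‖v (x - y) - u‖ ^ 2 * (v (x - y) i - u i)
        = k y * ‖v (x - y)‖ ^ 2 * v (x - y) i
          - (∑ j, (2 * u j) * (k y * (v (x - y) i * v (x - y) j)))
          + (∑ j, u j * u j) * (k y * v (x - y) i)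
          - u i * (∑ j, k y * (v (x - y) j * v (x - y) j))
          + (2 * u i) * (∑ j, u j * (k y * v (x - y) j))
          - ((∑ j, u j * u j) * u i) * k y := by
    intro i y
    have hsub : ∀ j : Fin d, (v (x - y) - u) j = v (x - y) j - u j := fun j => rfl
    rw [eucl_norm_sq, eucl_norm_sq]
    simp only [hsub]
    have e0 : ∑ j, (v (x - y) j - u j) * (v (x - y) j - u j)
        = (∑ j, v (x - y) j * v (x - y) j) - 2 * (∑ j, u j * v (x - y) j)
          + ∑ j, u j * u j := by
      rw [Finset.mul_sum, ← Finset.sum_sub_distrib, ← Finset.sum_add_distrib]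
      exact Finset.sum_congr rfl (fun j _ => by ring)
    have e2 : ∑ j, (2 * u j) * (k y * (v (x - y) i * v (x - y) j))
        = (2 * (k y * v (x - y) i)) * ∑ j, u j * v (x - y) j := by
      rw [Finset.mul_sum]
      exact Finset.sum_congr rfl (fun j _ => by ring)
    have e4 : ∑ j, k y * (v (x - y) j * v (x - y) j)
        = k y * ∑ j, v (x - y) j * v (x - y) j := by
      rw [Finset.mul_sum]
    have e5 : ∑ j, u j * (k y * v (x - y) j)
        = k y * ∑ j, u j * v (x - y) j := by
      rw [Finset.mul_sum]
      exact Finset.sum_congr rfl (fun j _ => by ring)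
    rw [e0, e2, e4, e5]
    ring
  -- the componentwise value of the K integral
  have hKcomp : ∀ i, Integrable
      (fun y => k y * ‖v (x - y) - u‖ ^ 2 * (v (x - y) i - u i)) := by
    intro i
    have : Integrable (fun y =>
        k y * ‖v (x - y)‖ ^ 2 * v (x - y) i
          - (∑ j, (2 * u j) * (k y * (v (x - y) i * v (x - y) j)))
          + (∑ j, u j * u j) * (k y * v (x - y) i)
          - u i * (∑ j, k y * (v (x - y) j * v (x - y) j))
          + (2 * u i) * (∑ j, u j * (k y * v (x - y) j))
          - ((∑ j, u j * u j) * u i) * k y) :=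
      (((((hP1 i).sub (hT2 i)).add ((hP3 i).const_mul _)).sub (hT4.const_mul _)).add
        (hT5.const_mul _)).sub (kint.const_mul _)
    exact this.congr (Filter.Eventually.of_forall (fun y => (expand i y).symm))
  have hKvec : Integrable
      (fun y => (k y * ‖v (x - y) - u‖ ^ 2) • (v (x - y) - u)) := by
    apply eucl_integrable_of_comp
    intro i
    refine (hKcomp i).congr ?_
    filter_upwards with y
    show k y * ‖v (x - y) - u‖ ^ 2 * (v (x - y) i - u i)
        = ((k y * ‖v (x - y) - u‖ ^ 2) • (v (x - y) - u)) i
    rfl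
  have key : ∀ i, (∫ y, k y * ‖v (x - y) - u‖ ^ 2 * (v (x - y) i - u i))
      = (∫ y, k y * ‖v (x - y)‖ ^ 2 * v (x - y) i)
        - 2 * (∑ j, u j * (∫ y, k y * (v (x - y) i * v (x - y) j)))
        + 2 * (∑ j, u j * u j) * u i
        - u i * (∑ j, ∫ y, k y * (v (x - y) j * v (x - y) j)) := by
    intro i
    rw [integral_congr_ae (Filter.Eventually.of_forall (expand i))]
    have I1 := hP1 i
    have I2 := hT2 i
    have I3 : Integrable (fun y => (∑ j, u j * u j) * (k y * v (x - y) i)) :=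
      (hP3 i).const_mul _
    have I4 : Integrable (fun y => u i * (∑ j, k y * (v (x - y) j * v (x - y) j))) :=
      hT4.const_mul _
    have I5 : Integrable (fun y => (2 * u i) * (∑ j, u j * (k y * v (x - y) j))) :=
      hT5.const_mul _
    have I6 : Integrable (fun y => ((∑ j, u j * u j) * u i) * k y) :=
      kint.const_mul _
    have A1 : Integrable (fun y => k y * ‖v (x - y)‖ ^ 2 * v (x - y) i - ∑ j, (2 * u j) * (k y * (v (x - y) i * v (x - y) j))) := I1.sub I2
    have A2 : Integrable (fun y => k y * ‖v (x - y)‖ ^ 2 * v (x - y) i - ∑ j, (2 * u j) * (k y * (v (x - y) i * v (x - y) j)) + (∑ j, u j * u j) * (k y * v (x - y) i)) := A1.add I3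
    have A3 : Integrable (fun y => k y * ‖v (x - y)‖ ^ 2 * v (x - y) i - ∑ j, (2 * u j) * (k y * (v (x - y) i * v (x - y) j)) + (∑ j, u j * u j) * (k y * v (x - y) i) - u i * (∑ j, k y * (v (x - y) j * v (x - y) j))) := A2.sub I4
    have A4 : Integrable (fun y => k y * ‖v (x - y)‖ ^ 2 * v (x - y) i - ∑ j, (2 * u j) * (k y * (v (x - y) i * v (x - y) j)) + (∑ j, u j * u j) * (k y * v (x - y) i) - u i * (∑ j, k y * (v (x - y) j * v (x - y) j)) + (2 * u i) * (∑ j, u j * (k y * v (x - y) j))) := A3.add I5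
    rw [integral_sub A4 I6, integral_add A3 I5, integral_sub A2 I4,
        integral_add A1 I3, integral_sub I1 I2]
    rw [integral_finset_sum _ (fun j _ => (h3 i j).const_mul _),
        integral_const_mul, integral_const_mul, integral_const_mul, integral_const_mul,
        integral_finset_sum _ (fun j _ => (hP3 j).const_mul _), hker_int]
    simp only [integral_const_mul]
    have hiu : ∀ j, (∫ y, k y * v (x - y) j) = u j := fun j => (hui j).symm
    simp only [hiu]
    rw [integral_finset_sum _ (fun j _ => h3 j j)]
    have hc : (2:ℝ) * ∑ j, u j * (∫ y, k y * (v (x - y) i * v (x - y) j))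
        = ∑ j, 2 * u j * (∫ y, k y * (v (x - y) i * v (x - y) j)) := by
      rw [Finset.mul_sum]
      exact Finset.sum_congr rfl (fun j _ => by ring)
    rw [hc]
    ring
  -- final assembly, componentwise
  ext i
  simp only [PiLp.sub_apply, PiLp.add_apply, PiLp.smul_apply, WithLp.equiv_symm_apply, PiLp.toLp_apply,
    smul_eq_mul]
  rw [eucl_integral_apply _ h1 i, eucl_integral_apply _ hKvec i]
  rw [show (fun y => ((k y * ‖v (x - y)‖ ^ 2) • v (x - y)) i)
      = fun y => k y * ‖v (x - y)‖ ^ 2 * v (x - y) i from rfl]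
  rw [show (fun y => ((k y * ‖v (x - y) - u‖ ^ 2) • (v (x - y) - u)) i)
      = fun y => k y * ‖v (x - y) - u‖ ^ 2 * (v (x - y) i - u i) from rfl]
  rw [key i]
  simp only [Rmat, ← hu_def, ← hk_def]
  rw [eucl_norm_sq u]
  have s1 : ∑ j, (u i * u j - ∫ y, k y * (v (x - y) i * v (x - y) j)) * u j
      = u i * (∑ j, u j * u j)
        - ∑ j, u j * (∫ y, k y * (v (x - y) i * v (x - y) j)) := by
    rw [show (∑ j, (u i * u j - ∫ y, k y * (v (x - y) i * v (x - y) j)) * u j)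
        = ∑ j, (u i * (u j * u j) - u j * (∫ y, k y * (v (x - y) i * v (x - y) j)))
      from Finset.sum_congr rfl (fun j _ => by ring),
      Finset.sum_sub_distrib, Finset.mul_sum]
  have s2 : ∑ j, (u j * u j - ∫ y, k y * (v (x - y) j * v (x - y) j))
      = (∑ j, u j * u j) - ∑ j, ∫ y, k y * (v (x - y) j * v (x - y) j) := by
    rw [Finset.sum_sub_distrib]
  rw [s1, s2]
  ring
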